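/- Let u : [t₀,T] → [0,L] be measurable, and define σ_L = inf{ t ∈ [t₀,T] : ∫_{t₀}^{t} u(s) ds ≤ c - L(T - t) } (with inf ∅ = +∞), where c is a constant. Suppose σ_L ≤ T and that u(r) = L for almost every r with ∫_{t₀}^{r} u(s) ds ≤ c - L(T - r). Then for every ε > 0, λ({ s ∈ [σ_L, (σ_L + ε) ∧ T] : u(s) > 0 }) > 0 whenever σ_L < T, i.e. u is strictly positive on a set of positive measure in every right neighborhood of σ_L. -/

import Mathlib

open Filter Set MeasureTheory intervalIntegral

/-- If after the exit time `σ_L` the constraint `∫_{t₀}^t u ≤ c - L(T-t)` forces `u = L`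
almost everywhere, then `u` is strictly positive on a set of positive Lebesgue measure in
every right neighborhood of `σ_L`, provided `σ_L < T`. -/
theorem control_positive_after_sigmaL
    (t₀ T L c : ℝ) (ht : t₀ < T) (hL : 0 < L)
    (u : ℝ → ℝ) (humeas : Measurable u) (hu : ∀ r, u r ∈ Set.Icc (0 : ℝ) L)
    (S : Set ℝ)
    (hS : S = {t ∈ Set.Icc t₀ T | (∫ s in t₀..t, u s) ≤ c - L * (T - t)})
    (hSne : S.Nonempty)
    (σL : ℝ) (hσL : σL = sInf S) (hσLT : σL ≤ T)
    (hfull : ∀ᵐ r ∂(volume.restrict (Set.Icc t₀ T)),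
      (∫ s in t₀..r, u s) ≤ c - L * (T - r) → u r = L) :
    σL < T → ∀ ε > 0,
      0 < volume {s ∈ Set.Icc σL (min (σL + ε) T) | 0 < u s} := by
  intro hlt ε hε
  set m := min (σL + ε) T with hm
  -- interval integrability of u on every interval
  have hint : ∀ a b : ℝ, IntervalIntegrable u volume a b := by
    intro a b
    refine IntervalIntegrable.mono_fun' (g := fun _ => L) intervalIntegrable_const
      humeas.aestronglyMeasurable ?_
    filter_upwards with x
    rw [Real.norm_eq_abs, abs_of_nonneg (hu x).1]
    exact (hu x).2
  -- S is closed
  have hSclosed : IsClosed S := by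
    rw [hS]
    have : {t ∈ Set.Icc t₀ T | (∫ s in t₀..t, u s) ≤ c - L * (T - t)} =
        Set.Icc t₀ T ∩ {t | (∫ s in t₀..t, u s) ≤ c - L * (T - t)} := rfl
    rw [this]
    refine isClosed_Icc.inter (isClosed_le ?_ (by continuity))
    exact intervalIntegral.continuous_primitive hint t₀
  have hbdd : BddBelow S := by
    refine ⟨t₀, fun x hx => ?_⟩
    rw [hS] at hx
    exact hx.1.1
  have hσmem : σL ∈ S := hσL ▸ hSclosed.csInf_mem hSne hbdd
  rw [hS] at hσmem
  obtain ⟨⟨ht₀σ, _⟩, hFσ⟩ := hσmem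
  -- the constraint holds for all t ≥ σL
  have hcons : ∀ t, σL ≤ t → (∫ s in t₀..t, u s) ≤ c - L * (T - t) := by
    intro t hst
    have h2 : (∫ s in σL..t, u s) ≤ (t - σL) * L := by
      have h := intervalIntegral.integral_mono_on (μ := volume) (f := u)
        (g := fun _ => L) hst (hint σL t) intervalIntegrable_const
        (fun x _ => (hu x).2)
      simpa [smul_eq_mul] using h
    have hsplit : (∫ s in t₀..t, u s) = (∫ s in t₀..σL, u s) + ∫ s in σL..t, u s :=
      (intervalIntegral.integral_add_adjacent_intervals (hint _ _) (hint _ _)).symm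
    rw [hsplit]
    nlinarith [hFσ, h2]
  have hσm : σL < m := lt_min (by linarith) hlt
  have hsub : Set.Icc σL m ⊆ Set.Icc t₀ T :=
    Set.Icc_subset_Icc ht₀σ (min_le_right _ _)
  have hae : ∀ᵐ s ∂(volume.restrict (Set.Icc σL m)), u s = L := by
    have h1 := ae_restrict_of_ae_restrict_of_subset hsub hfull
    filter_upwards [h1, ae_restrict_mem measurableSet_Icc] with s hs hmem
    exact hs (hcons s hmem.1)
  by_contra hcontra
  push_neg at hcontra
  have hA0 : volume {s ∈ Set.Icc σL m | 0 < u s} = 0 := le_antisymm hcontra zero_le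
  have hA' : ∀ᵐ s ∂(volume.restrict (Set.Icc σL m)),
      s ∉ {s ∈ Set.Icc σL m | 0 < u s} := by
    have : ∀ᵐ s ∂(volume : Measure ℝ), s ∉ {s ∈ Set.Icc σL m | 0 < u s} :=
      (measure_eq_zero_iff_ae_notMem).mp hA0
    exact this.filter_mono (ae_mono Measure.restrict_le_self)
  have h0 : ∀ᵐ s ∂(volume.restrict (Set.Icc σL m)), False := by
    filter_upwards [hae, ae_restrict_mem measurableSet_Icc, hA'] with s h1 h2 h3
    exact h3 ⟨h2, h1 ▸ hL⟩
  rw [ae_iff] at h0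
  simp only [not_false_eq_true, Set.setOf_true] at h0
  rw [Measure.restrict_apply_univ, Real.volume_Icc] at h0
  have : (0 : ℝ) < m - σL := by linarith
  simp [ENNReal.ofReal_eq_zero, not_le.mpr this] at h0
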